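/- For all c, z ∈ ℂ, the sequence n ↦ 2^{−n} · log(max(|f_c^n(z)|, 1)) converges to 0 if and only if the forward orbit {f_c^n(z) : n ≥ 0} of z under f_c is bounded. In particular, G_c(0) = 0 if and only if c lies in the Mandelbrot set. -/

import Mathlib

open Filter

theorem escape_rate_zero_iff_bounded_orbit (c z : ℂ) :
    Tendsto (fun n : ℕ =>
        ((2 : ℝ) ^ n)⁻¹ * Real.log (max (‖(fun w : ℂ => w ^ 2 + c)^[n] z‖) 1))
      atTop (nhds 0) ↔
    Bornology.IsBounded (Set.range fun n : ℕ => (fun w : ℂ => w ^ 2 + c)^[n] z) := by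
  set f : ℂ → ℂ := fun w => w ^ 2 + c with hf
  constructor
  · intro h
    by_contra hb
    set R : ℝ := max (‖c‖ + 2) 4 with hR
    have hR4 : (4:ℝ) ≤ R := le_max_right _ _
    have hRc : ‖c‖ + 2 ≤ R := le_max_left _ _
    have hc0 : (0:ℝ) ≤ ‖c‖ := norm_nonneg _
    -- get N with R ≤ abs (f^[N] z)
    rw [isBounded_iff_forall_norm_le] at hb
    push_neg at hb
    obtain ⟨x, ⟨N, hN⟩, hx⟩ := hb R
    have hN' : f^[N] z = x := hN
    have hNR : R ≤ ‖f^[N] z‖ := by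
      rw [hN']; exact hx.le
    -- growth lemma
    have key : ∀ k, R ≤ ‖f^[N+k] z‖ ∧
        2 ^ k * Real.log 2 ≤ Real.log (‖f^[N+k] z‖) - Real.log 2 := by
      intro k
      induction k with
      | zero =>
        refine ⟨by simpa using hNR, ?_⟩
        have h4 : (4:ℝ) ≤ ‖f^[N+0] z‖ := by simpa using le_trans hR4 hNR
        have hl : Real.log 4 ≤ Real.log (‖f^[N+0] z‖) :=
          Real.log_le_log (by norm_num) h4
        have : Real.log 4 = 2 * Real.log 2 := by
          rw [show (4:ℝ) = 2 ^ 2 by norm_num, Real.log_pow]; push_cast; ring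
        simp only [pow_zero, one_mul]
        linarith
      | succ k ih =>
        obtain ⟨hw, hlog⟩ := ih
        set w : ℂ := f^[N+k] z with hwdef
        have hw4 : (4:ℝ) ≤ ‖w‖ := le_trans hR4 hw
        have hwc : ‖c‖ + 2 ≤ ‖w‖ := le_trans hRc hw
        have hwpos : (0:ℝ) < ‖w‖ := by linarith
        have hiter : f^[N+(k+1)] z = f w := by
          rw [show N+(k+1) = (N+k)+1 from rfl, Function.iterate_succ_apply']
        have habs : ‖w‖ ^ 2 - ‖c‖ ≤ ‖f w‖ := by
          have h1 : ‖w ^ 2‖ ≤ ‖w ^ 2 + c‖ + ‖c‖ := by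
            calc ‖w ^ 2‖ = ‖(w ^ 2 + c) + (-c)‖ := by
                  congr 1; ring
            _ ≤ ‖w ^ 2 + c‖ + ‖-c‖ := norm_add_le _ _
            _ = ‖w ^ 2 + c‖ + ‖c‖ := by rw [norm_neg]
          have h2 : ‖w ^ 2‖ = ‖w‖ ^ 2 := norm_pow _ _
          have : ‖f w‖ = ‖w ^ 2 + c‖ := rfl
          linarith
        have hhalf : ‖w‖ ^ 2 / 2 ≤ ‖f w‖ := by
          nlinarith
        have hhalfpos : (0:ℝ) < ‖w‖ ^ 2 / 2 := by positivity
        have hRfw : R ≤ ‖f w‖ := by nlinarith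
        have hlog2 : Real.log (‖w‖ ^ 2 / 2) ≤ Real.log (‖f w‖) :=
          Real.log_le_log hhalfpos hhalf
        have hexp : Real.log (‖w‖ ^ 2 / 2)
            = 2 * Real.log (‖w‖) - Real.log 2 := by
          rw [Real.log_div (by positivity) (by norm_num), Real.log_pow]
          push_cast; ring
        refine ⟨by rwa [hiter], ?_⟩
        rw [hiter]
        have : 2 ^ (k+1) * Real.log 2 = 2 * (2 ^ k * Real.log 2) := by ring
        rw [this]
        linarith
    -- contradiction with tendsto 0
    have hε : (0:ℝ) < ((2:ℝ) ^ N)⁻¹ * Real.log 2 := by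
      have := Real.log_pos (by norm_num : (1:ℝ) < 2)
      positivity
    have hev := h (Iio_mem_nhds hε)
    rw [mem_map, mem_atTop_sets] at hev
    obtain ⟨n₀, hn₀⟩ := hev
    have hmem := hn₀ (N + n₀) (by omega)
    simp only [Set.mem_preimage, Set.mem_Iio] at hmem
    obtain ⟨hwR, hwlog⟩ := key n₀
    have h1le : (1:ℝ) ≤ ‖f^[N+n₀] z‖ := by linarith
    have hmax : max (‖f^[N+n₀] z‖) 1 = ‖f^[N+n₀] z‖ :=
      max_eq_left h1le
    have hlogbig : 2 ^ n₀ * Real.log 2 ≤ Real.log (‖f^[N+n₀] z‖) := by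
      have := Real.log_pos (by norm_num : (1:ℝ) < 2)
      linarith
    have hineq : ((2:ℝ) ^ N)⁻¹ * Real.log 2 ≤
        ((2:ℝ) ^ (N + n₀))⁻¹ * Real.log (max (‖f^[N+n₀] z‖) 1) := by
      rw [hmax]
      have h2 : ((2:ℝ) ^ (N + n₀))⁻¹ * (2 ^ n₀ * Real.log 2)
          = ((2:ℝ) ^ N)⁻¹ * Real.log 2 := by
        rw [pow_add]
        field_simp
      calc ((2:ℝ) ^ N)⁻¹ * Real.log 2 = ((2:ℝ) ^ (N + n₀))⁻¹ * (2 ^ n₀ * Real.log 2) :=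
            h2.symm
        _ ≤ _ := by
            apply mul_le_mul_of_nonneg_left hlogbig
            positivity
    exact absurd hmem (not_lt.mpr hineq)
  · intro h
    rw [isBounded_iff_forall_norm_le] at h
    obtain ⟨C, hC⟩ := h
    have hCn : ∀ n : ℕ, ‖f^[n] z‖ ≤ C := by
      intro n
      exact hC _ ⟨n, rfl⟩
    apply squeeze_zero (g := fun n : ℕ => ((2:ℝ) ^ n)⁻¹ * Real.log (max C 1))
    · intro n
      have : (0:ℝ) ≤ Real.log (max (‖f^[n] z‖) 1) :=
        Real.log_nonneg (le_max_right _ _)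
      positivity
    · intro n
      apply mul_le_mul_of_nonneg_left _ (by positivity)
      exact Real.log_le_log (by positivity) (max_le_max (hCn n) le_rfl)
    · have h0 : Tendsto (fun n : ℕ => ((2:ℝ)⁻¹) ^ n) atTop (nhds 0) :=
        tendsto_pow_atTop_nhds_zero_of_lt_one (by norm_num) (by norm_num)
      have := h0.mul_const (Real.log (max C 1))
      simpa [inv_pow] using this
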